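/- Let N ≥ 1, let H₁, …, H_{N−1}, S : ℝ^N → ℝ be continuously differentiable, let L be a symmetric positive-definite N × N real matrix, and let x : ℝ → ℝ^N be differentiable and satisfy ẋⁱ(t) = {xⁱ, H₁, …, H_{N−1}}(x(t)) + (L ∇S(x(t)))ⁱ for all t and i. Fix m ∈ {1, …, N−1} and a time t₀ with ∇S(x(t₀)) ≠ 0. If there is c > 0 with ∇H_m(x(t₀)) = −c ∇S(x(t₀)) (the gradients point in opposite directions), then d/dt H_m(x(t))|_{t=t₀} < 0; if there is c > 0 with ∇H_m(x(t₀)) = c ∇S(x(t₀)) (the gradients are aligned), then d/dt H_m(x(t))|_{t=t₀} > 0. -/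

import Mathlib

open Matrix

/-- Partial-derivative gradient of `f : ℝ^N → ℝ` at `x`. -/
noncomputable def grad {N : ℕ} (f : (Fin N → ℝ) → ℝ) (x : Fin N → ℝ) : Fin N → ℝ :=
  fun i => fderiv ℝ f x (Pi.single i 1)

/-- The `i`-th component of the Nambu vector field `{xⁱ, H₁, …, H_{N-1}}`:
the determinant of the Jacobian matrix of `(xⁱ, H₁, …, H_{N-1})`, i.e. the
Levi-Civita contraction
`Σ ε^{i j₁ … j_{N-1}} (∂H₁/∂x^{j₁}) ⋯ (∂H_{N-1}/∂x^{j_{N-1}})`. -/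
noncomputable def nambuVF (N : ℕ) (H : Fin (N - 1) → (Fin N → ℝ) → ℝ)
    (i : Fin N) (x : Fin N → ℝ) : ℝ :=
  Matrix.det (Matrix.of fun p q : Fin N =>
    if _h : (p : ℕ) = 0 then (Pi.single i 1 : Fin N → ℝ) q
    else grad (H ⟨(p : ℕ) - 1, by have := p.isLt; omega⟩) x q)

/-- grad ⬝ nambuVF = 0 -/
lemma grad_dot_nambu (N : ℕ) (hN : 1 ≤ N) (H : Fin (N - 1) → (Fin N → ℝ) → ℝ)
    (m : Fin (N - 1)) (p : Fin N → ℝ) :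
    ∑ i, grad (H m) p i * nambuVF N H i p = 0 := by
  classical
  set z : Fin N := ⟨0, hN⟩
  set B : Matrix (Fin N) (Fin N) ℝ := Matrix.of fun r q : Fin N =>
    if _h : (r : ℕ) = 0 then grad (H m) p q
    else grad (H ⟨(r : ℕ) - 1, by have := r.isLt; omega⟩) p q
  have hrow : ∀ i : Fin N,
      (Matrix.of fun r q : Fin N =>
        if _h : (r : ℕ) = 0 then (Pi.single i 1 : Fin N → ℝ) q
        else grad (H ⟨(r : ℕ) - 1, by have := r.isLt; omega⟩) p q)
      = B.updateRow z (Pi.single i 1) := by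
    intro i
    ext r q
    by_cases hr : (r : ℕ) = 0
    · have : r = z := Fin.ext hr
      subst this
      simp [B, Matrix.updateRow_self, hr]
    · have hrz : r ≠ z := fun h => hr (by simp [h, z])
      simp [B, Matrix.updateRow_ne hrz, hr]
  have key : ∑ i, grad (H m) p i * nambuVF N H i p
      = (B.updateRow z (∑ i, grad (H m) p i • (Pi.single i 1 : Fin N → ℝ))).det := by
    show _ = (Matrix.detRowAlternating (R := ℝ) (n := Fin N)).toMultilinearMap
        (Function.update (Matrix.of.symm B) z (∑ i, grad (H m) p i • (Pi.single i 1 : Fin N → ℝ)))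
    rw [MultilinearMap.map_update_sum]
    refine Finset.sum_congr rfl fun i _ => ?_
    rw [MultilinearMap.map_update_smul, smul_eq_mul]
    congr 1
    show nambuVF N H i p = _
    unfold nambuVF
    rw [hrow i]
    rfl
  have hsingle : (∑ i, grad (H m) p i • (Pi.single i 1 : Fin N → ℝ)) = grad (H m) p := by
    ext q
    simp [Finset.sum_apply, Pi.single_apply, mul_comm]
  rw [key, hsingle]
  have hm1 : (m : ℕ) + 1 < N := by have := m.isLt; omega
  set r : Fin N := ⟨(m : ℕ) + 1, hm1⟩
  apply Matrix.det_zero_of_row_eq (i := z) (j := r)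
  · intro h; simpa [z, r, Fin.ext_iff] using h
  · have hz : B.updateRow z (grad (H m) p) z = grad (H m) p := Matrix.updateRow_self
    have hrz : r ≠ z := by simp [z, r, Fin.ext_iff]
    rw [hz, Matrix.updateRow_ne hrz]
    show _ = (fun q => if _h : ((r : Fin N) : ℕ) = 0 then grad (H m) p q
      else grad (H ⟨((r : Fin N) : ℕ) - 1, by have := (r : Fin N).isLt; omega⟩) p q)
    ext q
    simp only [r]
    norm_num

/-- along a solution of the full dynamics with `L` symmetric
positive definite, at a time `t₀` where `∇S(x(t₀)) ≠ 0`: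
if `∇H_m(x(t₀)) = −c ∇S(x(t₀))` for some `c > 0` (opposite directions), then
`d/dt H_m(x(t))|_{t₀} < 0`; if `∇H_m(x(t₀)) = c ∇S(x(t₀))` for some `c > 0`
(aligned directions), then `d/dt H_m(x(t))|_{t₀} > 0`. -/
theorem hamiltonian_monotone_of_aligned_gradients
    (N : ℕ) (hN : 1 ≤ N) (H : Fin (N - 1) → (Fin N → ℝ) → ℝ)
    (hH : ∀ m, ContDiff ℝ 1 (H m))
    (S : (Fin N → ℝ) → ℝ) (hS : ContDiff ℝ 1 S)
    (L : Matrix (Fin N) (Fin N) ℝ)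
    (hLsymm : L.IsSymm)
    (hLpos : ∀ v : Fin N → ℝ, v ≠ 0 → 0 < v ⬝ᵥ L.mulVec v)
    (x : ℝ → Fin N → ℝ) (hx : Differentiable ℝ x)
    (hev : ∀ (t : ℝ) (i : Fin N),
      deriv x t i = nambuVF N H i (x t) + L.mulVec (grad S (x t)) i)
    (m : Fin (N - 1)) (t₀ : ℝ) (hgrad : grad S (x t₀) ≠ 0) :
    ((∃ c : ℝ, 0 < c ∧ grad (H m) (x t₀) = -c • grad S (x t₀)) →
        deriv (fun s => H m (x s)) t₀ < 0) ∧
    ((∃ c : ℝ, 0 < c ∧ grad (H m) (x t₀) = c • grad S (x t₀)) →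
        0 < deriv (fun s => H m (x s)) t₀) := by
  classical
  set p : Fin N → ℝ := x t₀ with hp
  set g : Fin N → ℝ := grad (H m) p with hg
  set gS : Fin N → ℝ := grad S p with hgS
  have hHd : DifferentiableAt ℝ (H m) p := ((hH m).differentiable one_ne_zero).differentiableAt
  have hderiv : deriv (fun s => H m (x s)) t₀ = fderiv ℝ (H m) p (deriv x t₀) :=
    (hHd.hasFDerivAt.comp_hasDerivAt t₀ (hx t₀).hasDerivAt).deriv
  have hfd : fderiv ℝ (H m) p (deriv x t₀) = ∑ i, deriv x t₀ i * g i := by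
    have h1 := (fderiv ℝ (H m) p).toLinearMap.pi_apply_eq_sum_univ (deriv x t₀)
    simp only [ContinuousLinearMap.coe_coe] at h1
    rw [h1]
    refine Finset.sum_congr rfl fun i _ => ?_
    rw [smul_eq_mul]
    congr 1
    show fderiv ℝ (H m) p (fun j => if i = j then 1 else 0) = grad (H m) p i
    congr 1
    ext j
    simp [Pi.single_apply, eq_comm]
  have hvalue : deriv (fun s => H m (x s)) t₀ = g ⬝ᵥ L.mulVec gS := by
    rw [hderiv, hfd]
    have : ∀ i, deriv x t₀ i = nambuVF N H i p + L.mulVec gS i := fun i => hev t₀ i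
    calc ∑ i, deriv x t₀ i * g i
        = ∑ i, (g i * nambuVF N H i p + g i * L.mulVec gS i) := by
          refine Finset.sum_congr rfl fun i _ => ?_
          rw [this i]; ring
      _ = (∑ i, g i * nambuVF N H i p) + ∑ i, g i * L.mulVec gS i := Finset.sum_add_distrib
      _ = g ⬝ᵥ L.mulVec gS := by
          rw [grad_dot_nambu N hN H m p, zero_add]; rfl
  have hpos : 0 < gS ⬝ᵥ L.mulVec gS := hLpos gS hgrad
  constructor
  · rintro ⟨c, hc, hcg⟩
    rw [hvalue, hcg, neg_smul, neg_dotProduct, smul_dotProduct, smul_eq_mul]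
    have : 0 < c * (gS ⬝ᵥ L.mulVec gS) := mul_pos hc hpos
    linarith
  · rintro ⟨c, hc, hcg⟩
    rw [hvalue, hcg, smul_dotProduct, smul_eq_mul]
    exact mul_pos hc hpos
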